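/- arXiv:2009.11374 — 2 statements merged into one kernel-verified Lean document; each statement's English description precedes it below -/
import Mathlib

section
/- Let T, T̂ : ℝ → ℝ⁴ˣ⁴ be differentiable curves with T(t) ∈ SE(3) for all t, satisfying the true kinematics Ṫ = T[U]∧ and the observer kinematics Ṫ̂ = T̂[U_m − b̂ − W]∧, where the measured velocity is U_m = U + b for a constant bias b ∈ ℝ⁶, and b̂, W : ℝ → ℝ⁶. Let b̃ = b − b̂. Then the pose error T̃ = T̂ T⁻¹ satisfies the error dynamics Ṫ̃(t) = T̂(t)[b̃(t) − W(t)]∧ T̂(t)⁻¹ T̃(t) for all t. -/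
open Matrix Real Filter Topology

/-- Skew-symmetric (cross-product) matrix `[y]×`. -/
def skew (y : Fin 3 → ℝ) : Matrix (Fin 3) (Fin 3) ℝ :=
  !![0, -y 2, y 1; y 2, 0, -y 0; -y 1, y 0, 0]

/-- Homogeneous transformation matrix `[[R, P],[0,1]]`. -/
def hom (R : Matrix (Fin 3) (Fin 3) ℝ) (P : Fin 3 → ℝ) :
    Matrix (Fin 3 ⊕ Fin 1) (Fin 3 ⊕ Fin 1) ℝ :=
  Matrix.fromBlocks R (Matrix.replicateCol (Fin 1) P) 0 1

/-- Wedge map `[U]∧` for `U = (u₁, u₂) ∈ ℝ⁶`. -/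
def wedge (u₁ u₂ : Fin 3 → ℝ) : Matrix (Fin 3 ⊕ Fin 1) (Fin 3 ⊕ Fin 1) ℝ :=
  Matrix.fromBlocks (skew u₁) (Matrix.replicateCol (Fin 1) u₂) 0 0

/-- Euclidean norm on ℝ³: `‖v‖ = √(vᵀ v)`. -/
noncomputable def norm3 (v : Fin 3 → ℝ) : ℝ := Real.sqrt (v ⬝ᵥ v)

/-- Rodrigues (angle-axis) rotation matrix. -/
noncomputable def rodrigues (θ : ℝ) (x : Fin 3 → ℝ) : Matrix (Fin 3) (Fin 3) ℝ :=
  1 + Real.sin θ • skew x + (1 - Real.cos θ) • (skew x * skew x)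

/-- Homogeneous 4-vector `(v, a)ᵀ`. -/
def vec4 (v : Fin 3 → ℝ) (a : ℝ) : Fin 3 ⊕ Fin 1 → ℝ := Sum.elim v (fun _ => a)

-- additivity of wedge
lemma skew_add (a b : Fin 3 → ℝ) : skew (a + b) = skew a + skew b := by
  ext i j; fin_cases i <;> fin_cases j <;> simp [skew] <;> ring

lemma wedge_add (a b c d : Fin 3 → ℝ) :
    wedge (a + b) (c + d) = wedge a c + wedge b d := by
  unfold wedge
  rw [Matrix.fromBlocks_add, skew_add]
  ext i j
  cases i <;> cases j <;> simp [Matrix.replicateCol]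

-- explicit inverse of hom R P
noncomputable def tinv (A : Matrix (Fin 3 ⊕ Fin 1) (Fin 3 ⊕ Fin 1) ℝ) :
    Matrix (Fin 3 ⊕ Fin 1) (Fin 3 ⊕ Fin 1) ℝ :=
  Matrix.fromBlocks (Matrix.of fun i j => A (Sum.inl j) (Sum.inl i))
    (Matrix.replicateCol (Fin 1) fun i => -(∑ m, A (Sum.inl m) (Sum.inl i) * A (Sum.inl m) (Sum.inr 0))) 0 1

lemma mul_tinv (R : Matrix (Fin 3) (Fin 3) ℝ) (P : Fin 3 → ℝ) (hR : R * Rᵀ = 1) :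
    hom R P * tinv (hom R P) = 1 := by
  have hR' : Rᵀ * R = 1 := mul_eq_one_comm.mp hR
  unfold hom tinv
  simp only [Matrix.fromBlocks_apply₁₁, Matrix.fromBlocks_apply₁₂, Matrix.fromBlocks_multiply]
  have h1 : (Matrix.of fun i j => R j i) = Rᵀ := by ext i j; simp [Matrix.transpose_apply]
  rw [h1, hR]
  have h2 : (Matrix.replicateCol (Fin 1) fun i => -(∑ m, R m i * (Matrix.replicateCol (Fin 1) P) m 0)) =
      Matrix.replicateCol (Fin 1) (-(Rᵀ *ᵥ P)) := by
    ext i j; simp [Matrix.replicateCol, Matrix.mulVec, dotProduct, Matrix.transpose_apply]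
  rw [h2]
  have h3 : R * Matrix.replicateCol (Fin 1) (-(Rᵀ *ᵥ P)) = Matrix.replicateCol (Fin 1) (R *ᵥ (-(Rᵀ *ᵥ P))) := by
    ext i j; simp [Matrix.replicateCol, Matrix.mulVec, Matrix.mul_apply, dotProduct]
  rw [h3]
  have h4 : R *ᵥ (-(Rᵀ *ᵥ P)) = -P := by
    rw [Matrix.mulVec_neg, Matrix.mulVec_mulVec, hR, Matrix.one_mulVec]
  rw [h4]
  simp [← Matrix.fromBlocks_one]
  ext i j; simp [Matrix.replicateCol]

lemma tinv_mul (R : Matrix (Fin 3) (Fin 3) ℝ) (P : Fin 3 → ℝ) (hR : R * Rᵀ = 1) :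
    tinv (hom R P) * hom R P = 1 :=
  mul_eq_one_comm.mp (mul_tinv R P hR)

-- entrywise product rule
lemma entry_mul_hasDerivAt {n : Type*} [Fintype n] {A B : ℝ → Matrix n n ℝ}
    {A' B' : Matrix n n ℝ} {t : ℝ}
    (hA : ∀ i j, HasDerivAt (fun s => A s i j) (A' i j) t)
    (hB : ∀ i j, HasDerivAt (fun s => B s i j) (B' i j) t) (i j : n) :
    HasDerivAt (fun s => (A s * B s) i j) ((A' * B t + A t * B') i j) t := by
  have h : ((A' * B t + A t * B') i j) = ∑ k, (A' i k * B t k j + A t i k * B' k j) := by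
    simp [Matrix.mul_apply, Matrix.add_apply, Finset.sum_add_distrib]
  rw [h]
  simp only [Matrix.mul_apply]
  exact HasDerivAt.fun_sum fun k _ => (hA i k).mul (hB k j)

noncomputable def dtinv (A A' : Matrix (Fin 3 ⊕ Fin 1) (Fin 3 ⊕ Fin 1) ℝ) :
    Matrix (Fin 3 ⊕ Fin 1) (Fin 3 ⊕ Fin 1) ℝ :=
  Matrix.fromBlocks (Matrix.of fun i j => A' (Sum.inl j) (Sum.inl i))
    (Matrix.replicateCol (Fin 1) fun i => -(∑ m, (A' (Sum.inl m) (Sum.inl i) * A (Sum.inl m) (Sum.inr 0)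
      + A (Sum.inl m) (Sum.inl i) * A' (Sum.inl m) (Sum.inr 0)))) 0 0

lemma hasDerivAt_tinv {T : ℝ → Matrix (Fin 3 ⊕ Fin 1) (Fin 3 ⊕ Fin 1) ℝ}
    {T' : Matrix (Fin 3 ⊕ Fin 1) (Fin 3 ⊕ Fin 1) ℝ} {t : ℝ}
    (hT : ∀ i j, HasDerivAt (fun s => T s i j) (T' i j) t) (i j : Fin 3 ⊕ Fin 1) :
    HasDerivAt (fun s => tinv (T s) i j) (dtinv (T t) T' i j) t := by
  cases i with
  | inl i =>
    cases j with
    | inl j =>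
      simpa [tinv, dtinv] using hT (Sum.inl j) (Sum.inl i)
    | inr j =>
      simp only [tinv, dtinv, Matrix.fromBlocks_apply₁₂, Matrix.replicateCol_apply]
      exact (HasDerivAt.fun_sum fun m _ =>
        ((hT (Sum.inl m) (Sum.inl i)).mul (hT (Sum.inl m) (Sum.inr 0)))).neg
  | inr i =>
    cases j with
    | inl j => simpa [tinv, dtinv] using hasDerivAt_const t (0:ℝ)
    | inr j => simpa [tinv, dtinv, Matrix.one_apply, Subsingleton.elim i j] using hasDerivAt_const t (1:ℝ)

/-- with true kinematics `Ṫ = T[U]∧`, observer kinematics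
`Ṫ̂ = T̂[U_m − b̂ − W]∧`, measured velocity `U_m = U + b` (constant bias `b`), and
bias error `b̃ = b − b̂`, the pose error `T̃ = T̂ T⁻¹` satisfies
`Ṫ̃ = T̂ [b̃ − W]∧ T̂⁻¹ T̃`. -/
theorem pose_error_dynamics (U₁ U₂ : ℝ → Fin 3 → ℝ) (b₁ b₂ : Fin 3 → ℝ)
    (bh₁ bh₂ W₁ W₂ : ℝ → Fin 3 → ℝ)
    (T Th : ℝ → Matrix (Fin 3 ⊕ Fin 1) (Fin 3 ⊕ Fin 1) ℝ)
    (hSE : ∀ t, ∃ (Rt : Matrix (Fin 3) (Fin 3) ℝ) (Pt : Fin 3 → ℝ),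
      (Rt * Rtᵀ = 1 ∧ Rt.det = 1) ∧ T t = hom Rt Pt)
    (hSEh : ∀ t, ∃ (Rt : Matrix (Fin 3) (Fin 3) ℝ) (Pt : Fin 3 → ℝ),
      (Rt * Rtᵀ = 1 ∧ Rt.det = 1) ∧ Th t = hom Rt Pt)
    (hT : ∀ t i j, HasDerivAt (fun s => T s i j) ((T t * wedge (U₁ t) (U₂ t)) i j) t)
    (hTh : ∀ t i j, HasDerivAt (fun s => Th s i j)
      ((Th t * wedge ((U₁ t + b₁) - bh₁ t - W₁ t) ((U₂ t + b₂) - bh₂ t - W₂ t)) i j) t) :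
    ∀ t i j, HasDerivAt (fun s => (Th s * (T s)⁻¹) i j)
      ((Th t * wedge ((b₁ - bh₁ t) - W₁ t) ((b₂ - bh₂ t) - W₂ t) * (Th t)⁻¹ *
        (Th t * (T t)⁻¹)) i j) t := by
  intro t i j
  -- invertibility facts
  have hmul : ∀ s, T s * tinv (T s) = 1 := by
    intro s; obtain ⟨R, P, ⟨h1, _⟩, h4⟩ := hSE s; rw [h4]; exact mul_tinv R P h1
  have hmul' : ∀ s, tinv (T s) * T s = 1 := fun s => mul_eq_one_comm.mp (hmul s)
  have hinv : ∀ s, (T s)⁻¹ = tinv (T s) := fun s => Matrix.inv_eq_right_inv (hmul s)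
  have hmulh : Th t * tinv (Th t) = 1 := by
    obtain ⟨R, P, ⟨h1, _⟩, h4⟩ := hSEh t; rw [h4]; exact mul_tinv R P h1
  have hmulh' : tinv (Th t) * Th t = 1 := mul_eq_one_comm.mp hmulh
  have hinvh : (Th t)⁻¹ = tinv (Th t) := Matrix.inv_eq_right_inv hmulh
  set wU := wedge (U₁ t) (U₂ t) with hwU
  set Wg := wedge ((b₁ - bh₁ t) - W₁ t) ((b₂ - bh₂ t) - W₂ t) with hWg
  set Td := T t * wU with hTd
  -- derivative of tinv ∘ T is -(wU * tinv (T t))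
  have hdt : dtinv (T t) Td = -(wU * tinv (T t)) := by
    have hzero : Td * tinv (T t) + T t * dtinv (T t) Td = 0 := by
      apply Matrix.ext; intro a c
      have h1 := entry_mul_hasDerivAt (hT t) (hasDerivAt_tinv (hT t)) a c
      have h2 : HasDerivAt (fun s => (T s * tinv (T s)) a c) 0 t := by
        have he : (fun s => (T s * tinv (T s)) a c)
            = fun _ => (1 : Matrix (Fin 3 ⊕ Fin 1) (Fin 3 ⊕ Fin 1) ℝ) a c := by
          funext s; rw [hmul s]
        rw [he]; exact hasDerivAt_const _ _
      simpa using h1.unique h2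
    have h5 : T t * dtinv (T t) Td = -(Td * tinv (T t)) :=
      eq_neg_of_add_eq_zero_left (by rw [add_comm]; exact hzero)
    calc dtinv (T t) Td = tinv (T t) * T t * dtinv (T t) Td := by rw [hmul' t, Matrix.one_mul]
      _ = tinv (T t) * (T t * dtinv (T t) Td) := by rw [Matrix.mul_assoc]
      _ = tinv (T t) * (-(T t * wU * tinv (T t))) := by rw [h5, hTd]
      _ = -(tinv (T t) * T t * (wU * tinv (T t))) := by
          rw [Matrix.mul_neg, Matrix.mul_assoc, Matrix.mul_assoc]
      _ = -(wU * tinv (T t)) := by rw [hmul' t, Matrix.one_mul]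
  -- the observer velocity splits
  have hsplit : wedge ((U₁ t + b₁) - bh₁ t - W₁ t) ((U₂ t + b₂) - bh₂ t - W₂ t) = wU + Wg := by
    rw [hwU, hWg, ← wedge_add]
    congr 1 <;> abel
  have key := entry_mul_hasDerivAt (hTh t) (hasDerivAt_tinv (hT t)) i j
  have hfun : (fun s => (Th s * (T s)⁻¹) i j) = (fun s => (Th s * tinv (T s)) i j) := by
    funext s; rw [hinv s]
  rw [hfun]
  have hEq : Th t * Wg * (Th t)⁻¹ * (Th t * (T t)⁻¹)
      = Th t * wedge ((U₁ t + b₁) - bh₁ t - W₁ t) ((U₂ t + b₂) - bh₂ t - W₂ t) * tinv (T t)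
        + Th t * dtinv (T t) Td := by
    rw [hinvh, hinv t, hsplit, hdt]
    calc Th t * Wg * tinv (Th t) * (Th t * tinv (T t))
        = Th t * Wg * (tinv (Th t) * Th t * tinv (T t)) := by
          rw [Matrix.mul_assoc (Th t * Wg), Matrix.mul_assoc (tinv (Th t))]
      _ = Th t * Wg * tinv (T t) := by rw [hmulh', Matrix.one_mul]
      _ = Th t * (wU + Wg) * tinv (T t) + Th t * -(wU * tinv (T t)) := by noncomm_ring
  rw [hEq]
  exact key
end

section
/- Fix n ≥ 1, positive constants k_p, k_w, α₁, …, αₙ, γ > 0, vectors e₁, …, eₙ, y₁, …, yₙ, b̃_Ω, b̃_V ∈ ℝ³, and R̂ ∈ SO(3). Define ψ(eᵢ) = k_p(1 + ‖eᵢ‖²)/4, ṗ̂ᵢ = −ψ(eᵢ)eᵢ, W_Ω = −k_w Σᵢ (1/αᵢ)[yᵢ]× R̂ᵀ eᵢ, W_V = −k_w Σᵢ (1/αᵢ) R̂ᵀ eᵢ, ḃ̂_Ω = −γ Σᵢ (1/αᵢ)[yᵢ]× R̂ᵀ eᵢ, ḃ̂_V = −γ Σᵢ (1/αᵢ) R̂ᵀ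 eᵢ, and ėᵢ = ṗ̂ᵢ + R̂[yᵢ]×(b̃_Ω − W_Ω) − R̂(b̃_V − W_V). Then the Lyapunov derivative V̇ = Σᵢ (1/αᵢ) eᵢᵀ ėᵢ − (1/γ) b̃_Ωᵀ ḃ̂_Ω − (1/γ) b̃_Vᵀ ḃ̂_V satisfies V̇ = −Σᵢ (ψ(eᵢ)/αᵢ)‖eᵢ‖² − k_w‖Σᵢ (1/αᵢ)[yᵢ]× R̂ᵀ eᵢ‖² − k_w‖Σᵢ (1/αᵢ) eᵢ‖², and in particular V̇ ≤ −Σᵢ (ψ(eᵢ)/αᵢ)‖eᵢ‖² − k_w‖Σᵢ eᵢ/αᵢ‖² ≤ 0. -/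
open Matrix Real Filter Topology

lemma skew_transpose (y : Fin 3 → ℝ) : (skew y)ᵀ = -skew y := by
  ext i j
  fin_cases i <;> fin_cases j <;> simp [skew]

lemma dot_mulVec' (v w : Fin 3 → ℝ) (M : Matrix (Fin 3) (Fin 3) ℝ) :
    v ⬝ᵥ M *ᵥ w = (Mᵀ *ᵥ v) ⬝ᵥ w := by
  rw [dotProduct_mulVec, mulVec_transpose]

lemma dot_self_nonneg3 (v : Fin 3 → ℝ) : 0 ≤ v ⬝ᵥ v :=
  Finset.sum_nonneg fun i _ => mul_self_nonneg _

lemma norm3_sq (v : Fin 3 → ℝ) : norm3 v ^ 2 = v ⬝ᵥ v :=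
  Real.sq_sqrt (dot_self_nonneg3 v)

lemma sum_dot {n : ℕ} (f : Fin n → Fin 3 → ℝ) (w : Fin 3 → ℝ) :
    (∑ i, f i) ⬝ᵥ w = ∑ i, f i ⬝ᵥ w := by
  simp only [dotProduct, Finset.sum_apply, Finset.sum_mul]
  exact Finset.sum_comm

lemma mulVec_sum' {n : ℕ} (M : Matrix (Fin 3) (Fin 3) ℝ) (f : Fin n → Fin 3 → ℝ) :
    M *ᵥ (∑ i, f i) = ∑ i, M *ᵥ f i := by
  ext j
  simp only [Matrix.mulVec, dotProduct, Finset.sum_apply, Finset.mul_sum]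
  exact Finset.sum_comm

/-- the Lyapunov derivative of the proposed observer satisfies
`V̇ = −Σᵢ (ψ(eᵢ)/αᵢ)‖eᵢ‖² − k_w ‖Σᵢ (1/αᵢ)[yᵢ]× R̂ᵀ eᵢ‖² − k_w ‖Σᵢ (1/αᵢ) eᵢ‖² ≤ 0`. -/
theorem lyapunov_derivative (n : ℕ) (hn : 1 ≤ n) (kp kw γ : ℝ)
    (hkp : 0 < kp) (hkw : 0 < kw) (hγ : 0 < γ)
    (α : Fin n → ℝ) (hα : ∀ i, 0 < α i)
    (e y : Fin n → Fin 3 → ℝ) (bΩ bV : Fin 3 → ℝ)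
    (Rh : Matrix (Fin 3) (Fin 3) ℝ) (hRh : Rh * Rhᵀ = 1) (hdeth : Rh.det = 1)
    (ψ : (Fin 3 → ℝ) → ℝ) (hψ : ∀ v, ψ v = kp * (1 + norm3 v ^ 2) / 4)
    (ph' : Fin n → Fin 3 → ℝ) (hph' : ∀ i, ph' i = -(ψ (e i)) • e i)
    (WΩ WV bhΩ' bhV' : Fin 3 → ℝ)
    (hWΩ : WΩ = -(kw • ∑ i, (α i)⁻¹ • (skew (y i) *ᵥ (Rhᵀ *ᵥ e i))))
    (hWV : WV = -(kw • ∑ i, (α i)⁻¹ • (Rhᵀ *ᵥ e i)))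
    (hbΩ' : bhΩ' = -(γ • ∑ i, (α i)⁻¹ • (skew (y i) *ᵥ (Rhᵀ *ᵥ e i))))
    (hbV' : bhV' = -(γ • ∑ i, (α i)⁻¹ • (Rhᵀ *ᵥ e i)))
    (e' : Fin n → Fin 3 → ℝ)
    (he' : ∀ i, e' i = ph' i + (Rh * skew (y i)) *ᵥ (bΩ - WΩ) - Rh *ᵥ (bV - WV))
    (Vdot : ℝ)
    (hVdot : Vdot = (∑ i, (α i)⁻¹ * (e i ⬝ᵥ e' i))
      - γ⁻¹ * (bΩ ⬝ᵥ bhΩ') - γ⁻¹ * (bV ⬝ᵥ bhV')) :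
    Vdot = -(∑ i, ψ (e i) / α i * norm3 (e i) ^ 2)
        - kw * norm3 (∑ i, (α i)⁻¹ • (skew (y i) *ᵥ (Rhᵀ *ᵥ e i))) ^ 2
        - kw * norm3 (∑ i, (α i)⁻¹ • e i) ^ 2 ∧
    Vdot ≤ -(∑ i, ψ (e i) / α i * norm3 (e i) ^ 2)
        - kw * norm3 (∑ i, (α i)⁻¹ • e i) ^ 2 ∧
    Vdot ≤ 0 := by
  set S := ∑ i, (α i)⁻¹ • (skew (y i) *ᵥ (Rhᵀ *ᵥ e i)) with hS
  set T := ∑ i, (α i)⁻¹ • (Rhᵀ *ᵥ e i) with hT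
  set E := ∑ i, (α i)⁻¹ • e i with hE
  -- orthogonality the other way
  have hTeq : T = Rhᵀ *ᵥ E := by
    rw [hT, hE, mulVec_sum']
    exact Finset.sum_congr rfl fun i _ => by rw [Matrix.mulVec_smul]
  have hTT : T ⬝ᵥ T = E ⬝ᵥ E := by
    rw [hTeq, dot_mulVec', transpose_transpose, Matrix.mulVec_mulVec, hRh,
      Matrix.one_mulVec]
  -- per-index expansion
  have key : ∀ i, (α i)⁻¹ * (e i ⬝ᵥ e' i)
      = -(ψ (e i) / α i * (e i ⬝ᵥ e i))
        - ((α i)⁻¹ • (skew (y i) *ᵥ (Rhᵀ *ᵥ e i))) ⬝ᵥ (bΩ + kw • S)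
        - ((α i)⁻¹ • (Rhᵀ *ᵥ e i)) ⬝ᵥ (bV + kw • T) := by
    intro i
    have h1 : e i ⬝ᵥ (Rh * skew (y i)) *ᵥ (bΩ + kw • S)
        = -((skew (y i) *ᵥ (Rhᵀ *ᵥ e i)) ⬝ᵥ (bΩ + kw • S)) := by
      rw [dot_mulVec', Matrix.transpose_mul, skew_transpose, Matrix.neg_mul,
        Matrix.neg_mulVec, neg_dotProduct, ← Matrix.mulVec_mulVec]
    have h2 : e i ⬝ᵥ Rh *ᵥ (bV + kw • T)
        = (Rhᵀ *ᵥ e i) ⬝ᵥ (bV + kw • T) := dot_mulVec' _ _ _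
    rw [he' i, hph' i, hWΩ, hWV, sub_neg_eq_add, sub_neg_eq_add,
      dotProduct_sub, dotProduct_add, h1, h2, dotProduct_smul, smul_dotProduct,
      smul_dotProduct, smul_eq_mul, smul_eq_mul, smul_eq_mul]
    field_simp
    ring
  have hsum : ∑ i, (α i)⁻¹ * (e i ⬝ᵥ e' i)
      = -(∑ i, ψ (e i) / α i * (e i ⬝ᵥ e i))
        - S ⬝ᵥ (bΩ + kw • S) - T ⬝ᵥ (bV + kw • T) := by
    simp only [key, Finset.sum_sub_distrib, Finset.sum_neg_distrib]
    rw [← sum_dot, ← sum_dot, ← hS, ← hT]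
  -- bias terms
  have hbΩterm : γ⁻¹ * (bΩ ⬝ᵥ bhΩ') = -(bΩ ⬝ᵥ S) := by
    rw [hbΩ', dotProduct_neg, dotProduct_smul, smul_eq_mul]
    field_simp
  have hbVterm : γ⁻¹ * (bV ⬝ᵥ bhV') = -(bV ⬝ᵥ T) := by
    rw [hbV', dotProduct_neg, dotProduct_smul, smul_eq_mul]
    field_simp
  have hmain : Vdot = -(∑ i, ψ (e i) / α i * (e i ⬝ᵥ e i))
      - kw * (S ⬝ᵥ S) - kw * (E ⬝ᵥ E) := by
    rw [hVdot, hsum, hbΩterm, hbVterm, dotProduct_add, dotProduct_add,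
      dotProduct_smul, dotProduct_smul, smul_eq_mul, smul_eq_mul, ← hTT,
      dotProduct_comm S bΩ, dotProduct_comm T bV]
    ring
  have hEq : Vdot = -(∑ i, ψ (e i) / α i * norm3 (e i) ^ 2)
      - kw * norm3 S ^ 2 - kw * norm3 E ^ 2 := by
    rw [hmain]
    simp only [norm3_sq]
  refine ⟨hEq, ?_, ?_⟩
  · rw [hEq]
    have : 0 ≤ kw * norm3 S ^ 2 := by positivity
    linarith
  · rw [hEq]
    have h1 : 0 ≤ ∑ i, ψ (e i) / α i * norm3 (e i) ^ 2 := by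
      refine Finset.sum_nonneg fun i _ => ?_
      have hψ' : 0 ≤ ψ (e i) := by rw [hψ]; positivity
      have := (hα i).le
      positivity
    have h2 : 0 ≤ kw * norm3 S ^ 2 := by positivity
    have h3 : 0 ≤ kw * norm3 E ^ 2 := by positivity
    linarith
end
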